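/- arXiv:2005.12814 — 3 statements merged into one kernel-verified Lean document; each statement's English description precedes it below -/
import Mathlib

section
/- Let p : ℕ → ℕ be given by a polynomial of degree n ≥ 2 with non-negative integer coefficients and linear coefficient at least 1. Then the real number ∑_{k ≥ 1} 1 / 2^{p(k)} is irrational. -/
lemma pow_gap (n k : ℕ) (hn : 2 ≤ n) : k ^ n + (2 * k + 1) ≤ (k + 1) ^ n := by
  induction n with
  | zero => omega
  | succ m ih =>
    rcases Nat.lt_or_ge m 2 with hm | hm
    · interval_cases m
      · omega
      · ring_nf; nlinarith
    · have h := ih hm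
      have he : (k^m + (2*k+1)) * (k+1) = k^(m+1) + (2*k+1) + (k^m + (2*k+1)*k) := by ring
      have hk : k ^ (m+1) + (2*k+1) ≤ (k^m + (2*k+1)) * (k+1) := by omega
      calc k ^ (m+1) + (2*k+1) ≤ (k^m + (2*k+1)) * (k+1) := hk
        _ ≤ (k+1)^m * (k+1) := Nat.mul_le_mul_right _ h
        _ = (k+1)^(m+1) := by ring

lemma eval_gap (p : Polynomial ℕ) (hdeg : 2 ≤ p.natDegree) (hlin : 1 ≤ p.coeff 1) (k : ℕ) :
    p.eval k + (2 * k + 1) ≤ p.eval (k + 1) := by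
  have hp0 : p ≠ 0 := fun h => by simp [h] at hlin
  have hlead : 1 ≤ p.coeff p.natDegree :=
    Nat.one_le_iff_ne_zero.mpr (Polynomial.leadingCoeff_ne_zero.mpr hp0)
  rw [Polynomial.eval_eq_sum_range (R := ℕ) k, Polynomial.eval_eq_sum_range (R := ℕ) (k+1),
    Finset.sum_range_succ, Finset.sum_range_succ]
  have h1 : ∑ i ∈ Finset.range p.natDegree, p.coeff i * k ^ i ≤
      ∑ i ∈ Finset.range p.natDegree, p.coeff i * (k+1) ^ i :=
    Finset.sum_le_sum fun i _ => Nat.mul_le_mul_left _ (Nat.pow_le_pow_left (by omega) i)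
  have h2 : p.coeff p.natDegree * k ^ p.natDegree + (2*k+1) ≤
      p.coeff p.natDegree * (k+1) ^ p.natDegree := by
    calc p.coeff p.natDegree * k ^ p.natDegree + (2*k+1)
        ≤ p.coeff p.natDegree * k ^ p.natDegree + p.coeff p.natDegree * (2*k+1) := by
          have : 2*k+1 ≤ p.coeff p.natDegree * (2*k+1) := Nat.le_mul_of_pos_left _ (by omega)
          omega
      _ = p.coeff p.natDegree * (k ^ p.natDegree + (2*k+1)) := by ring
      _ ≤ p.coeff p.natDegree * (k+1)^p.natDegree :=
          Nat.mul_le_mul_left _ (pow_gap p.natDegree k hdeg)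
  omega

lemma eval_one_pos (p : Polynomial ℕ) (hdeg : 2 ≤ p.natDegree) (hlin : 1 ≤ p.coeff 1) :
    1 ≤ p.eval 1 := by
  rw [Polynomial.eval_eq_sum_range (R := ℕ) 1]
  calc 1 ≤ p.coeff 1 * 1 ^ 1 := by simpa using hlin
    _ ≤ ∑ i ∈ Finset.range (p.natDegree + 1), p.coeff i * 1 ^ i :=
      Finset.single_le_sum (f := fun i => p.coeff i * 1 ^ i) (fun i _ => Nat.zero_le _) (Finset.mem_range.mpr (by omega))

/-- If `p` is a polynomial of degree `n ≥ 2` with non-negative integer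
coefficients and linear coefficient at least `1`, then `∑_{k ≥ 1} 1/2^(p k)` is
irrational. -/
theorem irrational_sum_poly (p : Polynomial ℕ) (hdeg : 2 ≤ p.natDegree)
    (hlin : 1 ≤ p.coeff 1) :
    Irrational (∑' k : ℕ, (1 : ℝ) / 2 ^ (p.eval (k + 1))) := by
  set q : ℕ → ℕ := fun k => p.eval (k + 1) with hq
  set f : ℕ → ℝ := fun k => (1 : ℝ) / 2 ^ (q k) with hf
  have hgap : ∀ k, q k + (2 * k + 3) ≤ q (k + 1) := by
    intro k
    have := eval_gap p hdeg hlin (k + 1)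
    simp only [hq]
    omega
  have hq0 : 1 ≤ q 0 := eval_one_pos p hdeg hlin
  have hqk : ∀ k, k + 1 ≤ q k := by
    intro k
    induction k with
    | zero => exact hq0
    | succ m ih => have := hgap m; omega
  have hmono : Monotone q := monotone_nat_of_le_succ fun k => by have := hgap k; omega
  have hshift : ∀ K k, q K + k ≤ q (k + K) := by
    intro K k
    induction k with
    | zero => simp
    | succ m ih =>
      have h1 := hgap (m + K)
      have h2 : q (m + 1 + K) = q (m + K + 1) := by ring_nf
      omega
  have hfpos : ∀ k, 0 < f k := fun k => by positivity
  have hfle : ∀ k, f k ≤ (1/2 : ℝ) ^ k := by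
    intro k
    have h : ((1:ℝ)/2) ^ (q k) ≤ (1/2 : ℝ) ^ k :=
      pow_le_pow_of_le_one (by norm_num) (by norm_num) (by have := hqk k; omega)
    simpa [hf, div_pow] using h
  have hsum : Summable f :=
    Summable.of_nonneg_of_le (fun k => (hfpos k).le) hfle summable_geometric_two
  rintro ⟨r, hr⟩
  set b := r.den with hb
  have hbpos : 0 < b := r.pos
  set K := b with hK
  set N := q K with hN
  set R := ∑' k, f (k + (K + 1)) with hR
  have hsplit : (∑ k ∈ Finset.range (K + 1), f k) + R = ∑' k, f k :=
    Summable.sum_add_tsum_nat_add (K + 1) hsum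
  have hRpos : 0 < R :=
    Summable.tsum_pos ((summable_nat_add_iff (K+1)).mpr hsum) (fun k => (hfpos _).le) 0 (hfpos _)
  -- tail bound
  have hRle : R ≤ 2 * (1/2 : ℝ) ^ (q (K + 1)) := by
    have hterm : ∀ k, f (k + (K + 1)) ≤ (1/2 : ℝ) ^ (q (K+1)) * (1/2) ^ k := by
      intro k
      have h1 : q (K + 1) + k ≤ q (k + (K + 1)) := hshift (K + 1) k
      have h2 : ((1:ℝ)/2) ^ (q (k + (K+1))) ≤ (1/2 : ℝ) ^ (q (K+1) + k) :=
        pow_le_pow_of_le_one (by norm_num) (by norm_num) h1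
      calc f (k + (K+1)) = ((1:ℝ)/2) ^ (q (k + (K+1))) := by simp [hf, div_pow]
        _ ≤ (1/2 : ℝ) ^ (q (K+1) + k) := h2
        _ = (1/2 : ℝ) ^ (q (K+1)) * (1/2) ^ k := pow_add _ _ _
    calc R ≤ ∑' k, (1/2 : ℝ) ^ (q (K+1)) * (1/2) ^ k :=
          Summable.tsum_le_tsum hterm ((summable_nat_add_iff (K+1)).mpr hsum)
            (summable_geometric_two.mul_left _)
      _ = (1/2 : ℝ) ^ (q (K+1)) * 2 := by rw [tsum_mul_left, tsum_geometric_two]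
      _ = 2 * (1/2 : ℝ) ^ (q (K+1)) := mul_comm _ _
  -- the partial sum times b * 2^N is a natural number
  set c : ℕ := ∑ k ∈ Finset.range (K + 1), b * 2 ^ (N - q k) with hc
  have hcR : (c : ℝ) = b * 2 ^ N * ∑ k ∈ Finset.range (K + 1), f k := by
    rw [Finset.mul_sum, hc, Nat.cast_sum]
    refine Finset.sum_congr rfl fun k hk => ?_
    have hkK : q k ≤ N := hmono (by simpa using Nat.lt_succ_iff.mp (Finset.mem_range.mp hk))
    have h2 : (2:ℝ) ^ (N - q k) = 2 ^ N / 2 ^ (q k) := by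
      rw [pow_sub₀ (2:ℝ) (by norm_num) hkK, div_eq_mul_inv]
    push_cast
    rw [h2]
    simp only [hf]
    rw [div_eq_mul_inv, div_eq_mul_inv]
    ring
  -- b * (∑' f) is the integer r.num
  have hxr : ((r.num : ℝ)) = b * (∑' k, f k) := by
    have hden : ((b:ℝ)) ≠ 0 := by positivity
    rw [← hr, Rat.cast_def]
    field_simp
    rfl
  set D : ℤ := r.num * 2 ^ N - c with hD
  have hDR : (D : ℝ) = b * 2 ^ N * R := by
    have h5 : (r.num : ℝ) * 2 ^ N = b * 2 ^ N * ((∑ k ∈ Finset.range (K + 1), f k) + R) := by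
      rw [hsplit, hxr]; ring
    have h6 : (D:ℝ) = (r.num:ℝ) * 2^N - (c:ℝ) := by push_cast [hD]; ring
    rw [h6, h5, hcR]; ring
  have hDpos : 0 < D := by
    have h : (0:ℝ) < (D:ℝ) := by rw [hDR]; positivity
    exact_mod_cast h
  have hD1 : (1:ℝ) ≤ b * 2 ^ N * R := by
    rw [← hDR]; exact_mod_cast hDpos
  -- final contradiction
  have hgapK : N + (2 * K + 3) ≤ q (K + 1) := hgap K
  have hup : (b:ℝ) * 2 ^ N * R ≤ 2 * b * (1/2 : ℝ) ^ (2 * K + 3) := by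
    have h1 : (b:ℝ) * 2 ^ N * R ≤ (b:ℝ) * 2 ^ N * (2 * (1/2 : ℝ) ^ (q (K+1))) :=
      mul_le_mul_of_nonneg_left hRle (by positivity)
    have h2 : ((1:ℝ)/2) ^ (q (K+1)) ≤ (1/2 : ℝ) ^ (N + (2 * K + 3)) :=
      pow_le_pow_of_le_one (by norm_num) (by norm_num) hgapK
    have h3 : (b:ℝ) * 2 ^ N * (2 * (1/2 : ℝ) ^ (q (K+1))) ≤
        (b:ℝ) * 2 ^ N * (2 * (1/2 : ℝ) ^ (N + (2 * K + 3))) :=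
      mul_le_mul_of_nonneg_left (by nlinarith [pow_pos (by norm_num : (0:ℝ) < 1/2) (q (K+1))])
        (by positivity)
    have h4 : (b:ℝ) * 2 ^ N * (2 * (1/2 : ℝ) ^ (N + (2 * K + 3))) =
        2 * b * (1/2 : ℝ) ^ (2 * K + 3) := by
      rw [pow_add, div_pow, div_pow, one_pow, one_pow]
      have hN0 : (2:ℝ) ^ N ≠ 0 := by positivity
      field_simp
    linarith
  have hlt : 2 * (b:ℝ) * (1/2 : ℝ) ^ (2 * K + 3) < 1 := by
    have hb2 : 2 * b < 2 ^ (2 * K + 3) := by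
      have := Nat.lt_two_pow_self (n := b)
      calc 2 * b < 2 * 2 ^ b := by omega
        _ = 2 ^ (b + 1) := by ring
        _ ≤ 2 ^ (2 * K + 3) := Nat.pow_le_pow_right (by norm_num) (by omega)
    have hb2' : (2 * (b:ℝ)) < 2 ^ (2 * K + 3) := by exact_mod_cast hb2
    have hpow : (0:ℝ) < 2 ^ (2 * K + 3) := by positivity
    rw [div_pow, one_pow, mul_one_div]
    exact (div_lt_one hpow).mpr hb2'
  linarith
end

section
/- Let p : ℕ → ℕ be a polynomial with non-negative integer coefficients of degree at least 1, and let d ≥ 2 be a natural number. Then ∑_{k ≥ 1} 1 / 2^{k + p(k) d^k} is irrational. -/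
open Finset

lemma nat_poly_eval_mono (p : Polynomial ℕ) : Monotone fun n => p.eval n := by
  intro a b hab
  simp only [Polynomial.eval_eq_sum_range]
  exact Finset.sum_le_sum fun i _ => Nat.mul_le_mul_left _ (Nat.pow_le_pow_left hab i)

lemma nat_poly_one_le_eval_one (p : Polynomial ℕ) (hdeg : 1 ≤ p.natDegree) : 1 ≤ p.eval 1 := by
  have hp : p ≠ 0 := fun h => by simp [h] at hdeg
  rw [Polynomial.eval_eq_sum_range]
  calc 1 ≤ p.coeff p.natDegree * 1 ^ p.natDegree := by
        simpa using Nat.one_le_iff_ne_zero.mpr (Polynomial.leadingCoeff_ne_zero.mpr hp)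
    _ ≤ ∑ i ∈ Finset.range (p.natDegree + 1), p.coeff i * 1 ^ i :=
        Finset.single_le_sum (f := fun i => p.coeff i * 1 ^ i) (fun i _ => Nat.zero_le _)
          (Finset.self_mem_range_succ _)

lemma irrational_tsum_two_pow_aux (e : ℕ → ℕ) (hgap : ∀ k, e k + k + 3 ≤ e (k + 1)) :
    Irrational (∑' k : ℕ, (1 : ℝ) / 2 ^ (e k)) := by
  have hmono : StrictMono e := strictMono_nat_of_lt_succ fun k => by have := hgap k; omega
  have hadd : ∀ n k, e n + k ≤ e (n + k) := by
    intro n k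
    induction k with
    | zero => simp
    | succ k ih =>
        have h2 : e (n + k) < e (n + k + 1) := hmono (Nat.lt_succ_self _)
        show e n + (k + 1) ≤ e (n + k + 1)
        omega
  have hek : ∀ k, k ≤ e k := by
    intro k
    have := hadd 0 k
    simp only [Nat.zero_add] at this
    omega
  set f : ℕ → ℝ := fun k => (1 / 2 : ℝ) ^ (e k) with hf
  have hEq : ∀ k, (1 : ℝ) / 2 ^ (e k) = f k := fun k => by
    show (1 : ℝ) / 2 ^ (e k) = (1 / 2 : ℝ) ^ (e k)
    rw [one_div_pow]
  have hfpos : ∀ k, 0 < f k := fun k => by positivity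
  have hgeo : Summable fun k : ℕ => (1 / 2 : ℝ) ^ k :=
    summable_geometric_of_lt_one (by norm_num) (by norm_num)
  have hsum : Summable f := by
    refine Summable.of_nonneg_of_le (fun k => (hfpos k).le) (fun k => ?_) hgeo
    exact pow_le_pow_of_le_one (by norm_num) (by norm_num) (hek k)
  simp only [hEq]
  rintro ⟨q, hq⟩
  set n : ℕ := q.den with hn
  have hb : 0 < q.den := q.pos
  -- tail sum
  have hsum' : Summable fun k => f (k + (n + 1)) := (summable_nat_add_iff (n + 1)).mpr hsum
  set T : ℝ := ∑' k : ℕ, f (k + (n + 1)) with hT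
  have hsplit : ∑ i ∈ Finset.range (n + 1), f i + T = ∑' i, f i :=
    Summable.sum_add_tsum_nat_add (n + 1) hsum
  have hTpos : 0 < T := Summable.tsum_pos hsum' (fun k => (hfpos _).le) 0 (hfpos _)
  have hTle : T ≤ (1 / 2 : ℝ) ^ (e (n + 1)) * 2 := by
    have h1 : ∀ k : ℕ, f (k + (n + 1)) ≤ (1 / 2 : ℝ) ^ (e (n + 1)) * (1 / 2) ^ k := by
      intro k
      rw [hf, ← pow_add]
      refine pow_le_pow_of_le_one (by norm_num) (by norm_num) ?_
      have := hadd (n + 1) k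
      rwa [Nat.add_comm (n + 1) k] at this
    calc T ≤ ∑' k : ℕ, (1 / 2 : ℝ) ^ (e (n + 1)) * (1 / 2) ^ k :=
          Summable.tsum_le_tsum h1 hsum' (hgeo.mul_left _)
      _ = (1 / 2 : ℝ) ^ (e (n + 1)) * 2 := by
          rw [tsum_mul_left, tsum_geometric_of_lt_one (by norm_num) (by norm_num)]
          norm_num
  -- the integer part
  set M : ℕ := ∑ i ∈ Finset.range (n + 1), 2 ^ (e n - e i) with hM
  have hMeq : (2 : ℝ) ^ (e n) * ∑ i ∈ Finset.range (n + 1), f i = (M : ℝ) := by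
    rw [hM, Finset.mul_sum]
    push_cast
    refine Finset.sum_congr rfl fun i hi => ?_
    have hle : e i ≤ e n := hmono.monotone (by simp at hi; omega)
    show (2 : ℝ) ^ (e n) * (1 / 2 : ℝ) ^ (e i) = 2 ^ (e n - e i)
    rw [one_div_pow, mul_one_div, div_eq_iff (by positivity), ← pow_add,
      Nat.sub_add_cancel hle]
  set z : ℝ := (q.den : ℝ) * 2 ^ (e n) * T with hz
  set m : ℤ := q.num * 2 ^ (e n) - (q.den : ℤ) * M with hm
  have hden : (q.den : ℝ) * (q : ℝ) = (q.num : ℝ) := by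
    rw [Rat.cast_def]
    field_simp
  have hzm : z = (m : ℝ) := by
    have hT' : T = (∑' i, f i) - ∑ i ∈ Finset.range (n + 1), f i := by linarith [hsplit]
    rw [hz, hm]
    push_cast
    rw [← hMeq, ← hden, hq, hT']
    ring
  have hzlt : z < 1 := by
    have h2 : (1 / 2 : ℝ) ^ (e (n + 1)) ≤ (1 / 2) ^ (e n + n + 3) :=
      pow_le_pow_of_le_one (by norm_num) (by norm_num) (hgap n)
    have hbound : z ≤ (q.den : ℝ) * 2 ^ (e n) * ((1 / 2) ^ (e n + n + 3) * 2) := by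
      refine mul_le_mul_of_nonneg_left (le_trans hTle ?_) (by positivity)
      nlinarith [h2]
    have hsimp : (q.den : ℝ) * 2 ^ (e n) * ((1 / 2) ^ (e n + n + 3) * 2) =
        (q.den : ℝ) / 2 ^ (n + 2) := by
      rw [div_pow, one_pow, pow_add, pow_add]
      field_simp
      ring
    rw [hsimp] at hbound
    refine lt_of_le_of_lt hbound ?_
    rw [div_lt_one (by positivity)]
    have : q.den < 2 ^ (n + 2) := lt_of_lt_of_le (Nat.lt_two_pow_self (n := q.den))
      (Nat.pow_le_pow_right (by norm_num) (by omega))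
    exact_mod_cast this
  have hzpos : 0 < z := by
    rw [hz]; positivity
  rw [hzm] at hzpos hzlt
  have h1 : 0 < m := by exact_mod_cast hzpos
  have h2 : m < 1 := by exact_mod_cast hzlt
  omega

/-- If `p` is a polynomial with non-negative integer coefficients of
degree at least `1` and `d ≥ 2`, then `∑_{k ≥ 1} 1/2^(k + p(k)·d^k)` is irrational. -/
theorem irrational_sum_poly_exp (p : Polynomial ℕ) (hdeg : 1 ≤ p.natDegree)
    (d : ℕ) (hd : 2 ≤ d) :
    Irrational (∑' k : ℕ, (1 : ℝ) / 2 ^ ((k + 1) + p.eval (k + 1) * d ^ (k + 1))) := by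
  refine irrational_tsum_two_pow_aux (fun k => (k + 1) + p.eval (k + 1) * d ^ (k + 1)) ?_
  intro k
  show (k + 1) + p.eval (k + 1) * d ^ (k + 1) + k + 3 ≤
      (k + 1 + 1) + p.eval (k + 1 + 1) * d ^ (k + 1 + 1)
  have h1 : 1 ≤ p.eval (k + 1) :=
    le_trans (nat_poly_one_le_eval_one p hdeg) (nat_poly_eval_mono p (by omega))
  have h2 : p.eval (k + 1) ≤ p.eval (k + 1 + 1) := nat_poly_eval_mono p (by omega)
  have h3 : 2 ^ (k + 1) ≤ d ^ (k + 1) := Nat.pow_le_pow_left hd _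
  have h4 : k + 2 ≤ 2 ^ (k + 1) := Nat.lt_two_pow_self (n := k + 1)
  have h5 : 2 * (p.eval (k + 1) * d ^ (k + 1)) ≤ p.eval (k + 1 + 1) * d ^ (k + 1 + 1) := by
    calc 2 * (p.eval (k + 1) * d ^ (k + 1)) = p.eval (k + 1) * (d ^ (k + 1) * 2) := by ring
      _ ≤ p.eval (k + 1 + 1) * (d ^ (k + 1) * d) :=
          Nat.mul_le_mul h2 (Nat.mul_le_mul le_rfl hd)
      _ = p.eval (k + 1 + 1) * d ^ (k + 1 + 1) := by rw [← pow_succ]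
  have h6 : d ^ (k + 1) ≤ p.eval (k + 1) * d ^ (k + 1) := Nat.le_mul_of_pos_left _ h1
  omega
end

section
/- Let K(t) be the field of rational functions over a field K. For every nonzero Laurent polynomial q(t) ∈ K[t^p, t^{-p}] and every multiple P = p·n of p (n ≥ 2), the image of q(t)·Id under the block embedding M_p(K[t^p, t^{-p}]) → M_P(K[t^P, t^{-P}]) (which sends t^p·Id_p to the P×P block companion-type matrix with Id_p on the subdiagonal blocks and t^P·Id_p in the top-right block) is an invertible matrix over K(t^P). -/
open Polynomial

namespace Statement14

variable {K : Type*} [Field K]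

noncomputable def psi (K : Type*) [Field K] (P : ℕ) (hP : 0 < P) : RatFunc K →+* RatFunc K :=
  IsFractionRing.lift (g := (algebraMap K[X] (RatFunc K)).comp (Polynomial.expand K P).toRingHom)
    ((RatFunc.algebraMap_injective K).comp (Polynomial.expand_injective hP))

lemma psi_algebraMap (P : ℕ) (hP : 0 < P) (f : K[X]) :
    psi K P hP (algebraMap K[X] (RatFunc K) f) = algebraMap K[X] (RatFunc K) (expand K P f) :=
  IsFractionRing.lift_algebraMap _ f

lemma psi_X (P : ℕ) (hP : 0 < P) : psi K P hP RatFunc.X = RatFunc.X ^ P := by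
  rw [← RatFunc.algebraMap_X, psi_algebraMap, expand_X, map_pow, RatFunc.algebraMap_X]

lemma psi_C (P : ℕ) (hP : 0 < P) (a : K) :
    psi K P hP (algebraMap K (RatFunc K) a) = algebraMap K (RatFunc K) a := by
  rw [IsScalarTower.algebraMap_apply K K[X] (RatFunc K), Polynomial.algebraMap_eq,
    psi_algebraMap, expand_C]

lemma poly_indep {P : ℕ} (hP : 0 < P) (B : Fin P → K[X])
    (h : ∑ k, expand K P (B k) * X ^ (k : ℕ) = 0) (k0 : Fin P) : B k0 = 0 := by
  ext i
  have h1 := congrArg (fun f => Polynomial.coeff f (P * i + (k0 : ℕ))) h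
  simp only [Polynomial.finset_sum_coeff, Polynomial.coeff_zero] at h1
  rw [Finset.sum_eq_single k0] at h1
  · rw [coeff_mul_X_pow', if_pos (by omega), Nat.add_sub_cancel, coeff_expand hP,
      if_pos (dvd_mul_right P i), Nat.mul_div_cancel_left i hP] at h1
    simpa using h1
  · intro k _ hk
    rw [coeff_mul_X_pow']
    split_ifs with hle
    · rw [coeff_expand hP, if_neg]
      rintro ⟨d, hd⟩
      apply hk
      apply Fin.ext
      have h2 : P * d + (k : ℕ) = P * i + (k0 : ℕ) := by omega
      have e1 := congrArg (fun x => x % P) h2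
      simpa [Nat.mul_add_mod, Nat.mod_eq_of_lt k.isLt, Nat.mod_eq_of_lt k0.isLt] using e1
    · rfl
  · intro hk0; exact absurd (Finset.mem_univ k0) hk0

lemma ratfunc_indep {P : ℕ} (hP : 0 < P) (v : Fin P → RatFunc K)
    (h : ∑ k, psi K P hP (v k) * RatFunc.X ^ (k : ℕ) = 0) : v = 0 := by
  classical
  set b : Fin P → K[X] := fun k => (v k).denom with hb
  have hbne : ∀ k, (b k) ≠ 0 := fun k => RatFunc.denom_ne_zero (v k)
  set A : Fin P → K[X] := fun k => (v k).num * ∏ l ∈ Finset.univ.erase k, b l with hA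
  have key : ∀ k, v k * algebraMap K[X] (RatFunc K) (∏ l, b l)
      = algebraMap K[X] (RatFunc K) (A k) := by
    intro k
    have hsplit : (∏ l, b l) = b k * ∏ l ∈ Finset.univ.erase k, b l :=
      (Finset.mul_prod_erase _ _ (Finset.mem_univ k)).symm
    have hdk : algebraMap K[X] (RatFunc K) (b k) ≠ 0 := by
      simpa using (RatFunc.algebraMap_ne_zero (hbne k))
    have hvk : v k * algebraMap K[X] (RatFunc K) (b k)
        = algebraMap K[X] (RatFunc K) ((v k).num) := by
      conv_lhs => rw [← RatFunc.num_div_denom (v k)]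
      exact div_mul_cancel₀ _ hdk
    rw [hsplit, map_mul, ← mul_assoc, hvk, hA, map_mul]
  have h2 : ∑ k, algebraMap K[X] (RatFunc K) (expand K P (A k) * X ^ (k : ℕ)) = 0 := by
    have h3 := congrArg (fun x => x * psi K P hP (algebraMap K[X] (RatFunc K) (∏ l, b l))) h
    simp only [Finset.sum_mul, zero_mul] at h3
    rw [← h3]
    apply Finset.sum_congr rfl
    intro k _
    calc algebraMap K[X] (RatFunc K) (expand K P (A k) * X ^ (k : ℕ))
        = algebraMap K[X] (RatFunc K) (expand K P (A k)) * RatFunc.X ^ (k : ℕ) := by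
          rw [map_mul, map_pow, RatFunc.algebraMap_X]
      _ = psi K P hP (algebraMap K[X] (RatFunc K) (A k)) * RatFunc.X ^ (k : ℕ) := by
          rw [psi_algebraMap]
      _ = psi K P hP (v k * algebraMap K[X] (RatFunc K) (∏ l, b l)) * RatFunc.X ^ (k : ℕ) := by
          rw [key k]
      _ = psi K P hP (v k) * RatFunc.X ^ (k : ℕ)
          * psi K P hP (algebraMap K[X] (RatFunc K) (∏ l, b l)) := by
          rw [map_mul]; ring
  rw [← map_sum] at h2
  have h4 : ∑ k, expand K P (A k) * X ^ (k : ℕ) = 0 :=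
    RatFunc.algebraMap_injective K (by simpa using h2)
  funext k
  have h5 := poly_indep hP A h4 k
  have h7 : (∏ l ∈ Finset.univ.erase k, b l) ≠ 0 :=
    Finset.prod_ne_zero_iff.mpr (fun l _ => hbne l)
  have h6 : (v k).num = 0 := (mul_eq_zero.mp h5).resolve_right h7
  simpa using RatFunc.num_eq_zero_iff.mp h6

lemma q_ne_zero (r : ℕ) (hr : 0 < r) (c : ℤ →₀ K) (hc : c ≠ 0) :
    (∑ j ∈ c.support, algebraMap K (RatFunc K) (c j) * ((RatFunc.X : RatFunc K) ^ r) ^ j) ≠ 0 := by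
  have hne : c.support.Nonempty := Finsupp.support_nonempty_iff.mpr hc
  set m : ℕ := (c.support.inf' hne id).natAbs with hm
  have hjm : ∀ j ∈ c.support, 0 ≤ j + (m : ℤ) := by
    intro j hj
    have h1 : c.support.inf' hne id ≤ j := Finset.inf'_le id hj
    omega
  set Z : RatFunc K := RatFunc.X ^ r with hZ
  have hZ0 : Z ≠ 0 := pow_ne_zero _ RatFunc.X_ne_zero
  intro h0
  have h1 : ∑ j ∈ c.support, algebraMap K (RatFunc K) (c j) * Z ^ (j + (m : ℤ)) = 0 := by
    have := congrArg (fun x => x * Z ^ (m : ℤ)) h0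
    simp only [Finset.sum_mul, zero_mul] at this
    rw [← this]
    apply Finset.sum_congr rfl
    intro j _
    rw [zpow_add₀ hZ0]
    ring
  have h2 : ∑ j ∈ c.support,
      algebraMap K[X] (RatFunc K) (C (c j) * X ^ (r * (j + (m : ℤ)).toNat)) = 0 := by
    rw [← h1]
    apply Finset.sum_congr rfl
    intro j hj
    rw [map_mul, map_pow, RatFunc.algebraMap_X, ← Polynomial.algebraMap_eq,
      ← IsScalarTower.algebraMap_apply K K[X] (RatFunc K), pow_mul, ← hZ,
      ← zpow_natCast Z, Int.toNat_of_nonneg (hjm j hj)]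
  rw [← map_sum] at h2
  have h3 : ∑ j ∈ c.support, C (c j) * X ^ (r * (j + (m : ℤ)).toNat) = 0 :=
    RatFunc.algebraMap_injective K (by simpa using h2)
  obtain ⟨j0, hj0⟩ := hne
  have h4 := congrArg (fun f => Polynomial.coeff f (r * (j0 + (m : ℤ)).toNat)) h3
  simp only [Polynomial.finset_sum_coeff, Polynomial.coeff_zero] at h4
  rw [Finset.sum_eq_single j0] at h4
  · rw [Polynomial.coeff_C_mul, Polynomial.coeff_X_pow, if_pos rfl] at h4
    simp only [mul_one] at h4
    exact (Finsupp.mem_support_iff.mp hj0) h4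
  · intro j hj hne'
    rw [Polynomial.coeff_C_mul, Polynomial.coeff_X_pow, if_neg, mul_zero]
    intro heq
    have := Nat.eq_of_mul_eq_mul_left hr heq
    have hj' := hjm j hj
    have hj0' := hjm j0 hj0
    omega
  · intro h; exact absurd hj0 h

variable {K : Type*} [Field K]

noncomputable def Cmat (K : Type*) [Field K] (p P : ℕ) : Matrix (Fin P) (Fin P) (RatFunc K) :=
  Matrix.of fun i k => if (i : ℕ) = (k : ℕ) + p then (1 : RatFunc K)
    else if (i : ℕ) + P = (k : ℕ) + p then RatFunc.X else 0

noncomputable def Dmat (K : Type*) [Field K] (p P : ℕ) : Matrix (Fin P) (Fin P) (RatFunc K) :=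
  Matrix.of fun i k => if (k : ℕ) = (i : ℕ) + p then (1 : RatFunc K)
    else if (k : ℕ) + P = (i : ℕ) + p then (RatFunc.X)⁻¹ else 0

lemma Cmat_mulVec (p P : ℕ) (hp : 0 < p) (hpP : p < P) (v : Fin P → RatFunc K) (i k : Fin P)
    (hik : (i : ℕ) = ((k : ℕ) + p) % P) :
    (Cmat K p P).mulVec v i = if (k : ℕ) + p < P then v k else RatFunc.X * v k := by
  have hkP := k.isLt
  rw [Matrix.mulVec, dotProduct, Finset.sum_eq_single k]
  · split_ifs with h
    · rw [Nat.mod_eq_of_lt h] at hik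
      simp [Cmat, hik]
    · have hik' : (i : ℕ) = (k : ℕ) + p - P := by
        rw [hik, Nat.mod_eq_sub_mod (by omega), Nat.mod_eq_of_lt (by omega)]
      rw [Cmat, Matrix.of_apply, if_neg (by omega), if_pos (by omega)]
  · intro k' _ hk'
    have hik2 : (i : ℕ) < P := i.isLt
    have : (i : ℕ) = (k : ℕ) + p ∨ (i : ℕ) + P = (k : ℕ) + p := by
      rcases Nat.lt_or_ge ((k : ℕ) + p) P with h | h
      · left; rw [hik, Nat.mod_eq_of_lt h]
      · right; rw [hik, Nat.mod_eq_sub_mod (by omega), Nat.mod_eq_of_lt (by omega)]; omega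
    rw [Cmat, Matrix.of_apply, if_neg, if_neg, zero_mul]
    · intro h2
      exact hk' (Fin.ext (by omega))
    · intro h2
      exact hk' (Fin.ext (by omega))
  · intro h; exact absurd (Finset.mem_univ k) h

lemma Dmat_mulVec (p P : ℕ) (hp : 0 < p) (hpP : p < P) (v : Fin P → RatFunc K) (i k : Fin P)
    (hik : (k : ℕ) = ((i : ℕ) + p) % P) :
    (Dmat K p P).mulVec v i = if (i : ℕ) + p < P then v k else (RatFunc.X)⁻¹ * v k := by
  have hkP := k.isLt
  have hiP := i.isLt
  have hk' : (i : ℕ) + p < P → (k : ℕ) = (i : ℕ) + p := fun h => by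
    rw [hik, Nat.mod_eq_of_lt h]
  have hk'' : ¬ ((i : ℕ) + p < P) → (k : ℕ) + P = (i : ℕ) + p := fun h => by
    rw [hik, Nat.mod_eq_sub_mod (by omega), Nat.mod_eq_of_lt (by omega)]; omega
  rw [Matrix.mulVec, dotProduct, Finset.sum_eq_single k]
  · split_ifs with h
    · rw [Dmat, Matrix.of_apply, if_pos (hk' h), one_mul]
    · rw [Dmat, Matrix.of_apply, if_neg (by have := hk'' h; omega), if_pos (hk'' h)]
  · intro k' _ hne
    rcases Nat.lt_or_ge ((i : ℕ) + p) P with h | h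
    · have := hk' h
      rw [Dmat, Matrix.of_apply, if_neg, if_neg, zero_mul]
      · omega
      · intro h2; exact hne (Fin.ext (by omega))
    · have := hk'' (by omega)
      rw [Dmat, Matrix.of_apply, if_neg, if_neg, zero_mul]
      · intro h2; exact hne (Fin.ext (by omega))
      · omega
  · intro h; exact absurd (Finset.mem_univ k) h

noncomputable def L (P : ℕ) (hP : 0 < P) (v : Fin P → RatFunc K) : RatFunc K :=
  ∑ k, psi K P hP (v k) * RatFunc.X ^ (k : ℕ)

open Fin.NatCast in
lemma L_C (p P : ℕ) (hp : 0 < p) (hpP : p < P) (v : Fin P → RatFunc K) :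
    L P (by omega) ((Cmat K p P).mulVec v) = RatFunc.X ^ p * L P (by omega) v := by
  have hP : 0 < P := by omega
  haveI : NeZero P := ⟨hP.ne'⟩
  unfold L
  rw [Finset.mul_sum,
    ← Equiv.sum_comp (Equiv.addRight ((p : Fin P)))
      (fun i => psi K P hP ((Cmat K p P).mulVec v i) * RatFunc.X ^ (i : ℕ))]
  apply Finset.sum_congr rfl
  intro k _
  simp only [Equiv.coe_addRight]
  have hval : ((k + (p : Fin P) : Fin P) : ℕ) = ((k : ℕ) + p) % P := by
    rw [Fin.val_add, Fin.val_cast_of_lt hpP]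
  rw [Cmat_mulVec p P hp hpP v _ k hval]
  have hkP := k.isLt
  split_ifs with h
  · rw [hval, Nat.mod_eq_of_lt h, pow_add]
    ring
  · rw [hval, Nat.mod_eq_sub_mod (by omega), Nat.mod_eq_of_lt (by omega),
      map_mul, psi_X]
    have e1 : (RatFunc.X : RatFunc K) ^ P * RatFunc.X ^ ((k : ℕ) + p - P)
        = RatFunc.X ^ ((k : ℕ) + p) := by
      rw [← pow_add]; congr 1; omega
    calc RatFunc.X ^ P * psi K P hP (v k) * RatFunc.X ^ ((k : ℕ) + p - P)
        = psi K P hP (v k) * (RatFunc.X ^ P * RatFunc.X ^ ((k : ℕ) + p - P)) := by ring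
      _ = psi K P hP (v k) * RatFunc.X ^ ((k : ℕ) + p) := by rw [e1]
      _ = RatFunc.X ^ p * (psi K P hP (v k) * RatFunc.X ^ (k : ℕ)) := by
          rw [pow_add]; ring

open Fin.NatCast in
lemma L_D (p P : ℕ) (hp : 0 < p) (hpP : p < P) (v : Fin P → RatFunc K) :
    L P (by omega) ((Dmat K p P).mulVec v) * RatFunc.X ^ p = L P (by omega) v := by
  have hP : 0 < P := by omega
  haveI : NeZero P := ⟨hP.ne'⟩
  unfold L
  rw [Finset.sum_mul,
    ← Equiv.sum_comp (Equiv.addRight ((p : Fin P)))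
      (fun k => psi K P hP (v k) * RatFunc.X ^ (k : ℕ))]
  apply Finset.sum_congr rfl
  intro i _
  simp only [Equiv.coe_addRight]
  have hval : ((i + (p : Fin P) : Fin P) : ℕ) = ((i : ℕ) + p) % P := by
    rw [Fin.val_add, Fin.val_cast_of_lt hpP]
  rw [Dmat_mulVec p P hp hpP v i (i + (p : Fin P)) hval]
  have hiP := i.isLt
  split_ifs with h
  · rw [hval, Nat.mod_eq_of_lt h, pow_add]
    ring
  · rw [hval, Nat.mod_eq_sub_mod (by omega), Nat.mod_eq_of_lt (by omega),
      map_mul, map_inv₀, psi_X]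
    have hXP : (RatFunc.X : RatFunc K) ^ P ≠ 0 := pow_ne_zero _ RatFunc.X_ne_zero
    have e1 : (RatFunc.X : RatFunc K) ^ ((i : ℕ) + p)
        = RatFunc.X ^ P * RatFunc.X ^ ((i : ℕ) + p - P) := by
      rw [← pow_add]; congr 1; omega
    field_simp
    calc psi K P hP (v (i + (p : Fin P))) * RatFunc.X ^ (i : ℕ) * RatFunc.X ^ p
        = psi K P hP (v (i + (p : Fin P))) * RatFunc.X ^ ((i : ℕ) + p) := by
          rw [pow_add]; ring
      _ = psi K P hP (v (i + (p : Fin P))) * RatFunc.X ^ ((i : ℕ) + p - P) * RatFunc.X ^ P := by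
          rw [e1]; ring
      _ = RatFunc.X ^ P * psi K P hP (v (i + (p : Fin P))) * RatFunc.X ^ ((i : ℕ) + p - P) := by
          ring

lemma L_C_pow (p P : ℕ) (hp : 0 < p) (hpP : p < P) (m : ℕ) (v : Fin P → RatFunc K) :
    L P (by omega) (((Cmat K p P) ^ m).mulVec v) = RatFunc.X ^ (p * m) * L P (by omega) v := by
  induction m generalizing v with
  | zero => simp [Matrix.one_mulVec]
  | succ m ih =>
    rw [pow_succ, ← Matrix.mulVec_mulVec, ih, L_C p P hp hpP]
    rw [← mul_assoc, ← pow_add]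
    congr 2 <;> ring

lemma L_D_pow (p P : ℕ) (hp : 0 < p) (hpP : p < P) (m : ℕ) (v : Fin P → RatFunc K) :
    L P (by omega) (((Dmat K p P) ^ m).mulVec v) * RatFunc.X ^ (p * m) = L P (by omega) v := by
  induction m generalizing v with
  | zero => simp [Matrix.one_mulVec]
  | succ m ih =>
    rw [pow_succ, ← Matrix.mulVec_mulVec]
    have e1 : p * (m + 1) = p * m + p := by ring
    rw [e1, pow_add, ← mul_assoc, ih, L_D p P hp hpP]

lemma L_sum {ι : Type*} (P : ℕ) (hP : 0 < P) (s : Finset ι) (w : ι → Fin P → RatFunc K) :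
    L P hP (∑ j ∈ s, w j) = ∑ j ∈ s, L P hP (w j) := by
  unfold L
  simp only [Finset.sum_apply, map_sum, Finset.sum_mul]
  rw [Finset.sum_comm]

lemma L_smul (P : ℕ) (hP : 0 < P) (a : K) (v : Fin P → RatFunc K) :
    L P hP (a • v) = algebraMap K (RatFunc K) a * L P hP v := by
  unfold L
  rw [Finset.mul_sum]
  apply Finset.sum_congr rfl
  intro k _
  rw [Pi.smul_apply, Algebra.smul_def, map_mul, psi_C]
  ring

lemma sum_mulVec {ι n : Type*} [Fintype n] {R : Type*} [CommRing R]
    (s : Finset ι) (M : ι → Matrix n n R) (v : n → R) :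
    (∑ j ∈ s, M j).mulVec v = ∑ j ∈ s, (M j).mulVec v := by
  ext i
  simp only [Matrix.mulVec, dotProduct, Matrix.sum_apply, Finset.sum_apply,
    Finset.sum_mul]
  rw [Finset.sum_comm]

lemma L_N (p P : ℕ) (hp : 0 < p) (hpP : p < P) (c : ℤ →₀ K) (v : Fin P → RatFunc K) :
    L P (by omega) ((∑ j ∈ c.support, c j •
        (if 0 ≤ j then Cmat K p P ^ j.toNat else Dmat K p P ^ (-j).toNat)).mulVec v)
      = (∑ j ∈ c.support, algebraMap K (RatFunc K) (c j) * ((RatFunc.X : RatFunc K) ^ p) ^ j)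
        * L P (by omega) v := by
  have hP : 0 < P := by omega
  rw [sum_mulVec, L_sum, Finset.sum_mul]
  apply Finset.sum_congr rfl
  intro j _
  rw [Matrix.smul_mulVec, L_smul]
  by_cases hj : 0 ≤ j
  · rw [if_pos hj, L_C_pow p P hp hpP]
    have e1 : ((RatFunc.X : RatFunc K) ^ p) ^ j = (RatFunc.X ^ p) ^ (j.toNat) := by
      rw [← zpow_natCast (RatFunc.X ^ p : RatFunc K) j.toNat, Int.toNat_of_nonneg hj]
    rw [e1, ← pow_mul]
    ring
  · rw [if_neg hj, ]
    set m : ℕ := (-j).toNat with hm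
    have e1 : ((RatFunc.X : RatFunc K) ^ p) ^ j = ((RatFunc.X ^ p) ^ m)⁻¹ := by
      rw [show j = -(m : ℤ) by omega, zpow_neg, zpow_natCast]
    have h1 := L_D_pow p P hp hpP m v
    have hx : (RatFunc.X : RatFunc K) ^ (p * m) ≠ 0 := pow_ne_zero _ RatFunc.X_ne_zero
    have e2 : L P hP ((Dmat K p P ^ m).mulVec v) = ((RatFunc.X ^ p) ^ m)⁻¹ * L P hP v := by
      rw [← pow_mul, ← h1, mul_comm (L P hP ((Dmat K p P ^ m).mulVec v)),
        inv_mul_cancel_left₀ hx]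
    rw [e2, e1]
    ring

set_option maxHeartbeats 1000000 in
lemma main_aux (p P : ℕ) (hp : 0 < p) (hpP : p < P) (c : ℤ →₀ K) (hc : c ≠ 0) :
    IsUnit (∑ j ∈ c.support, c j •
      (if 0 ≤ j then
        (Matrix.of fun i k : Fin P =>
          if (i : ℕ) = (k : ℕ) + p then (1 : RatFunc K)
          else if (i : ℕ) + P = (k : ℕ) + p then RatFunc.X ^ P
          else 0) ^ j.toNat
      else
        (Matrix.of fun i k : Fin P =>
          if (k : ℕ) = (i : ℕ) + p then (1 : RatFunc K)
          else if (k : ℕ) + P = (i : ℕ) + p then (RatFunc.X ^ P)⁻¹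
          else 0) ^ (-j).toNat)) := by
  classical
  have hP : 0 < P := by omega
  have hC : (psi K P hP).mapMatrix (Cmat K p P) = Matrix.of (fun i k : Fin P =>
      if (i : ℕ) = (k : ℕ) + p then (1 : RatFunc K)
      else if (i : ℕ) + P = (k : ℕ) + p then RatFunc.X ^ P else 0) := by
    ext i k
    simp only [RingHom.mapMatrix_apply, Matrix.map_apply, Cmat, Matrix.of_apply]
    rw [apply_ite (psi K P hP), apply_ite (psi K P hP), map_one, map_zero, psi_X]
  have hD : (psi K P hP).mapMatrix (Dmat K p P) = Matrix.of (fun i k : Fin P =>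
      if (k : ℕ) = (i : ℕ) + p then (1 : RatFunc K)
      else if (k : ℕ) + P = (i : ℕ) + p then (RatFunc.X ^ P)⁻¹ else 0) := by
    ext i k
    simp only [RingHom.mapMatrix_apply, Matrix.map_apply, Dmat, Matrix.of_apply]
    rw [apply_ite (psi K P hP), apply_ite (psi K P hP), map_one, map_zero, map_inv₀, psi_X]
  have hsmul : ∀ (a : K) (T : Matrix (Fin P) (Fin P) (RatFunc K)),
      (psi K P hP).mapMatrix (a • T) = a • (psi K P hP).mapMatrix T := by
    intro a T
    ext i k
    simp only [RingHom.mapMatrix_apply, Matrix.map_apply, Matrix.smul_apply]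
    rw [Algebra.smul_def, Algebra.smul_def, map_mul, psi_C]
  have hN : IsUnit (∑ j ∈ c.support, c j •
      (if 0 ≤ j then Cmat K p P ^ j.toNat else Dmat K p P ^ (-j).toNat)) := by
    rw [Matrix.isUnit_iff_isUnit_det, isUnit_iff_ne_zero]
    intro hdet
    obtain ⟨v, hv0, hv⟩ := Matrix.exists_mulVec_eq_zero_iff.mpr hdet
    have hkey := L_N p P hp hpP c v
    rw [hv] at hkey
    have hL0 : L P hP (0 : Fin P → RatFunc K) = 0 := by simp [L]
    rw [hL0] at hkey
    have hq := q_ne_zero p hp c hc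
    have hLv : L P hP v = 0 := by
      rcases mul_eq_zero.mp hkey.symm with h | h
      · exact absurd h hq
      · exact h
    exact hv0 (ratfunc_indep hP v (by simpa [L] using hLv))
  have heq : (∑ j ∈ c.support, c j •
      (if 0 ≤ j then
        (Matrix.of fun i k : Fin P =>
          if (i : ℕ) = (k : ℕ) + p then (1 : RatFunc K)
          else if (i : ℕ) + P = (k : ℕ) + p then RatFunc.X ^ P
          else 0) ^ j.toNat
      else
        (Matrix.of fun i k : Fin P =>
          if (k : ℕ) = (i : ℕ) + p then (1 : RatFunc K)
          else if (k : ℕ) + P = (i : ℕ) + p then (RatFunc.X ^ P)⁻¹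
          else 0) ^ (-j).toNat))
      = (psi K P hP).mapMatrix (∑ j ∈ c.support, c j •
        (if 0 ≤ j then Cmat K p P ^ j.toNat else Dmat K p P ^ (-j).toNat)) := by
    rw [map_sum]
    apply Finset.sum_congr rfl
    intro j _
    rw [hsmul]
    congr 1
    split_ifs with hj
    · rw [map_pow, hC]
    · rw [map_pow, hD]
  rw [heq]
  exact hN.map (psi K P hP).mapMatrix

end Statement14



/-- Let `K` be a field, `p ≥ 1`, `n ≥ 2`, `P = p·n`. The block
embedding `M_p(K[t^p, t^{-p}]) → M_P(K[t^P, t^{-P}])` sends `t^p·Id_p` to the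
block matrix `C` with identity `p×p` blocks on the subdiagonal and `t^P·Id_p` in
the top-right block.  A nonzero Laurent polynomial `q(t) = ∑_j c_j (t^p)^j`
(encoded by its finitely supported coefficient function `c : ℤ →₀ K`) is sent to
`∑_j c_j • C^j`, and this image is invertible over the rational function field
`K(t^P) ⊆ K(t)`.  Here `C` and its inverse `C⁻¹` (used for the negative powers)
are written entrywise, with `t = RatFunc.X`. -/
theorem image_of_nonzero_laurent_is_invertible (K : Type*) [Field K]
    (p nn : ℕ) (hp : 1 ≤ p) (hnn : 2 ≤ nn) (c : ℤ →₀ K) (hc : c ≠ 0) :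
    IsUnit (∑ j ∈ c.support, c j •
      (if 0 ≤ j then
        (Matrix.of fun i k : Fin (p * nn) =>
          if (i : ℕ) = (k : ℕ) + p then (1 : RatFunc K)
          else if (i : ℕ) + p * nn = (k : ℕ) + p then RatFunc.X ^ (p * nn)
          else 0) ^ j.toNat
      else
        (Matrix.of fun i k : Fin (p * nn) =>
          if (k : ℕ) = (i : ℕ) + p then (1 : RatFunc K)
          else if (k : ℕ) + p * nn = (i : ℕ) + p then (RatFunc.X ^ (p * nn))⁻¹
          else 0) ^ (-j).toNat)) := by
  have hpP : p < p * nn := by nlinarith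
  exact Statement14.main_aux p (p * nn) (by omega) hpP c hc
end
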